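/- Let C₁ ⊆ ℂ^M be a linear subspace with orthogonal projection P_{C₁}, let s ∈ [0,∞)^M, C₂ = {c : |c_i| = s_i for all i}, and let P_{C₂} be a closest-point map onto C₂ (i.e., P_{C₂}(c) ∈ C₂ and ‖c − P_{C₂}(c)‖₂ ≤ ‖c − y‖₂ for all y ∈ C₂). Define the Griffin–Lim iterates by c₀ ∈ C₁ and c_{n+1} = P_{C₁}(P_{C₂}(c_n)). Then the sequence of objective values d_{C₂}(c_n) is nonincreasing: d_{C₂}(c_{n+1}) ≤ d_{C₂}(c_n) for all n. -/

import Mathlib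

/-- Let `K = C₁` be a linear subspace of `ℂ^M` with closest-point
(= orthogonal) projection `P₁`, and let `P₂` be a closest-point map onto the magnitude
set `C₂ = {c : |cᵢ| = sᵢ ∀ i}`. For the Griffin–Lim iterates `c₀ ∈ C₁`,
`c_{n+1} = P₁(P₂(c_n))`, the objective values `d_{C₂}(c_n)` are nonincreasing. -/
theorem griffin_lim_objective_nonincreasing (M : ℕ)
    (K : Submodule ℂ (EuclideanSpace ℂ (Fin M)))
    (s : Fin M → ℝ) (hs : ∀ i, 0 ≤ s i)
    (P₁ P₂ : EuclideanSpace ℂ (Fin M) → EuclideanSpace ℂ (Fin M))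
    (hP₁ : ∀ c, P₁ c ∈ K ∧ ∀ y ∈ K, ‖c - P₁ c‖ ≤ ‖c - y‖)
    (hP₂ : ∀ c, (∀ i, ‖P₂ c i‖ = s i) ∧
      ∀ y : EuclideanSpace ℂ (Fin M), (∀ i, ‖y i‖ = s i) →
        ‖c - P₂ c‖ ≤ ‖c - y‖)
    (c : ℕ → EuclideanSpace ℂ (Fin M)) (hc0 : c 0 ∈ K)
    (hrec : ∀ n, c (n + 1) = P₁ (P₂ (c n))) :
    ∀ n : ℕ,
      Metric.infDist (c (n + 1)) {d : EuclideanSpace ℂ (Fin M) | ∀ i, ‖d i‖ = s i} ≤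
      Metric.infDist (c n) {d : EuclideanSpace ℂ (Fin M) | ∀ i, ‖d i‖ = s i} := by
  set S := {d : EuclideanSpace ℂ (Fin M) | ∀ i, ‖d i‖ = s i}
  have hmem : ∀ n, c n ∈ K := by
    intro n
    cases n with
    | zero => exact hc0
    | succ n => rw [hrec n]; exact (hP₁ (P₂ (c n))).1
  intro n
  have hP2mem : P₂ (c n) ∈ S := (hP₂ (c n)).1
  have h1 : Metric.infDist (c (n + 1)) S ≤ dist (c (n + 1)) (P₂ (c n)) :=
    Metric.infDist_le_dist_of_mem hP2mem
  have h2 : dist (c (n + 1)) (P₂ (c n)) ≤ dist (c n) (P₂ (c n)) := by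
    rw [hrec n, dist_eq_norm, dist_eq_norm, ← norm_neg, neg_sub, ← norm_neg (c n - _), neg_sub]
    exact (hP₁ (P₂ (c n))).2 (c n) (hmem n)
  have h3 : dist (c n) (P₂ (c n)) = Metric.infDist (c n) S := by
    refine le_antisymm ?_ (Metric.infDist_le_dist_of_mem hP2mem)
    by_contra h
    obtain ⟨y, hy, hlt⟩ := (Metric.infDist_lt_iff ⟨P₂ (c n), hP2mem⟩).1 (lt_of_not_ge h)
    have := (hP₂ (c n)).2 y hy
    rw [← dist_eq_norm, ← dist_eq_norm] at this
    linarith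
  linarith
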